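/- Let g and v be as in the Cauchy problem −v'' = λg(v), v(0) = ℓ ∈ (0,L), v'(0) = 0, with g continuous decreasing, g > 0 on [0,L), g ≡ 1 on (−∞,0]. Then there exists R_ℓ > 0 with v(R_ℓ) = 0, and R_ℓ = (1/√(2λ)) ∫₀^ℓ dt / √(∫ₜ^ℓ g(s)ds). -/

import Mathlib

open Set MeasureTheory intervalIntegral Filter

theorem stmt10 (L lam ℓ : ℝ) (hL : 0 < L) (hlam : 0 < lam) (hℓ : 0 < ℓ) (hℓL : ℓ < L)
    (g : ℝ → ℝ) (hgcont : Continuous g) (hganti : Antitone g)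
    (hgneg : ∀ s ≤ 0, g s = 1) (hgL : g L = 0) (hgpos : ∀ s < L, 0 < g s)
    (hgrange : ∀ s, 0 ≤ g s ∧ g s ≤ 1)
    (v v' : ℝ → ℝ)
    (hv : ∀ s, 0 ≤ s → HasDerivAt v (v' s) s)
    (hv'' : ∀ s, 0 ≤ s → HasDerivAt v' (-(lam * g (v s))) s)
    (hv0 : v 0 = ℓ) (hv'0 : v' 0 = 0) :
    ∃ R > 0, v R = 0 ∧
      R = (1 / Real.sqrt (2 * lam)) *
        ∫ t in (0:ℝ)..ℓ, 1 / Real.sqrt (∫ s in t..ℓ, g s) := by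
  have hg0 : ∀ s, 0 ≤ g s := fun s => (hgrange s).1
  have hgl : 0 < g ℓ := hgpos ℓ hℓL
  set G : ℝ → ℝ := fun x => ∫ s in (0:ℝ)..x, g s with hGdef
  have hGderiv : ∀ x, HasDerivAt G (g x) x := fun x =>
    intervalIntegral.integral_hasDerivAt_right (hgcont.intervalIntegrable _ _)
      (hgcont.stronglyMeasurableAtFilter _ _) hgcont.continuousAt
  have hGcont : Continuous G :=
    continuous_iff_continuousAt.2 fun x => (hGderiv x).continuousAt
  have hGsub : ∀ t, G ℓ - G t = ∫ s in t..ℓ, g s := fun t =>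
    intervalIntegral.integral_interval_sub_left (hgcont.intervalIntegrable _ _)
      (hgcont.intervalIntegrable _ _)
  have hGlow : ∀ t ≤ ℓ, g ℓ * (ℓ - t) ≤ G ℓ - G t := by
    intro t ht
    rw [hGsub]
    have : ∫ s in t..ℓ, g ℓ ≤ ∫ s in t..ℓ, g s :=
      intervalIntegral.integral_mono_on ht (intervalIntegrable_const)
        (hgcont.intervalIntegrable _ _) (fun x hx => hganti hx.2)
    simpa [mul_comm] using this
  have hGpos : ∀ t < ℓ, 0 < G ℓ - G t := fun t ht =>
    lt_of_lt_of_le (mul_pos hgl (by linarith)) (hGlow t ht.le)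
  have hGmono : Monotone G :=
    monotone_of_deriv_nonneg (fun x => (hGderiv x).differentiableAt)
      (fun x => by rw [(hGderiv x).deriv]; exact hg0 x)
  have hGsm : StrictMonoOn G (Iic L) :=
    strictMonoOn_of_deriv_pos (convex_Iic L) hGcont.continuousOn
      (fun x hx => by
        rw [(hGderiv x).deriv]; exact hgpos x (by simpa [interior_Iic] using hx))
  -- energy identity
  have hEs : ∀ s, 0 ≤ s → v' s ^ 2 = 2 * lam * (G ℓ - G (v s)) := by
    intro s hs
    set E : ℝ → ℝ := fun x => v' x ^ 2 + 2 * lam * G (v x) with hEdef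
    have hE : ∀ x, 0 ≤ x → HasDerivAt E 0 x := by
      intro x hx
      have h1 : HasDerivAt (fun y => v' y ^ 2)
          (2 * v' x ^ 1 * (-(lam * g (v x)))) x := (hv'' x hx).pow 2
      have h2 : HasDerivAt (fun y => G (v y)) (g (v x) * v' x) x :=
        (hGderiv (v x)).comp x (hv x hx)
      have := h1.add (h2.const_mul (2 * lam))
      convert this using 1
      · rfl
      · rfl
      · rfl
      · ring
    have hconst : ∀ x ∈ Icc 0 s, E x = E 0 :=
      constant_of_has_deriv_right_zero
        (fun x hx => ((hE x hx.1).continuousAt).continuousWithinAt)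
        (fun x hx => (hE x hx.1).hasDerivWithinAt)
    have := hconst s ⟨hs, le_rfl⟩
    simp only [hEdef, hv0, hv'0] at this
    nlinarith [this]
  have hvle : ∀ s, 0 ≤ s → v s ≤ ℓ := by
    intro s hs
    by_contra hlt
    push_neg at hlt
    have hle : G (v s) ≤ G ℓ := by nlinarith [hEs s hs, sq_nonneg (v' s)]
    have : G ℓ < G (v s) := by
      rcases le_or_gt (v s) L with h | h
      · exact hGsm (mem_Iic.2 hℓL.le) (mem_Iic.2 h) hlt
      · exact lt_of_lt_of_le (hGsm (mem_Iic.2 hℓL.le) (mem_Iic.2 le_rfl) hℓL) (hGmono h.le)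
    linarith
  have hgv : ∀ s, 0 ≤ s → 0 < g (v s) := fun s hs =>
    lt_of_lt_of_le hgl (hganti (hvle s hs))
  have hv'anti : StrictAntiOn v' (Ici 0) :=
    strictAntiOn_of_deriv_neg (convex_Ici 0)
      (fun x hx => ((hv'' x hx).continuousAt).continuousWithinAt)
      (fun x hx => by
        have hx0 : (0:ℝ) ≤ x := le_of_lt (by simpa [interior_Ici] using hx)
        rw [(hv'' x hx0).deriv]
        have := hgv x hx0
        nlinarith)
  have hv'neg : ∀ s, 0 < s → v' s < 0 := by
    intro s hs
    have := hv'anti (self_mem_Ici) (le_of_lt hs : (0:ℝ) ≤ s) hs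
    rwa [hv'0] at this
  have hv'le : ∀ s, 0 ≤ s → v' s ≤ 0 := by
    intro s hs
    rcases eq_or_lt_of_le hs with h | h
    · rw [← h, hv'0]
    · exact (hv'neg s h).le
  have hv'eq : ∀ s, 0 ≤ s → v' s = -Real.sqrt (2 * lam * (G ℓ - G (v s))) := by
    intro s hs
    rw [← hEs s hs, Real.sqrt_sq_eq_abs, abs_of_nonpos (hv'le s hs), neg_neg]
  have hvanti : StrictAntiOn v (Ici 0) :=
    strictAntiOn_of_deriv_neg (convex_Ici 0)
      (fun x hx => ((hv x hx).continuousAt).continuousWithinAt)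
      (fun x hx => by
        have hx0 : (0:ℝ) < x := by simpa [interior_Ici] using hx
        rw [(hv x hx0.le).deriv]
        exact hv'neg x hx0)
  -- there exists a point where v is negative
  have h1 : v' 1 < 0 := hv'neg 1 one_pos
  obtain ⟨s₀, hs₀1, hs₀neg⟩ : ∃ s₀ ≥ 1, v s₀ < 0 := by
    have key : ∀ s ≥ 1, v s ≤ v 1 + v' 1 * (s - 1) := by
      intro s hs
      set u : ℝ → ℝ := fun x => v x - v' 1 * x with hu
      have hanti : AntitoneOn u (Ici 1) := by
        apply antitoneOn_of_deriv_nonpos (convex_Ici 1)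
        · intro x hx
          exact (((hv x (le_trans zero_le_one hx)).sub
            ((hasDerivAt_id x).const_mul (v' 1))).continuousAt).continuousWithinAt
        · intro x hx
          have hx1 : (1:ℝ) < x := by simpa [interior_Ici] using hx
          exact (((hv x (le_trans zero_le_one hx1.le)).sub
            ((hasDerivAt_id x).const_mul (v' 1))).differentiableAt).differentiableWithinAt
        · intro x hx
          have hx1 : (1:ℝ) < x := by simpa [interior_Ici] using hx
          have hdu : HasDerivAt u (v' x - v' 1) x := by
            rw [hu]
            have := (hv x (le_trans zero_le_one hx1.le)).sub
              ((hasDerivAt_id x).const_mul (v' 1))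
            exact (by simpa using this : HasDerivAt (v - fun y => v' 1 * y) (v' x - v' 1) x)
          rw [hdu.deriv]
          have := hv'anti (mem_Ici.mpr zero_le_one)
            (show x ∈ Ici (0:ℝ) from le_trans zero_le_one hx1.le) hx1
          linarith
      have := hanti (self_mem_Ici) (hs : (1:ℝ) ≤ s) hs
      simp only [hu] at this
      nlinarith
    set A : ℝ := max (v 1) 0 + 1 with hA
    have hApos : 0 < A := by positivity
    have hAdiv : 0 ≤ A / (-v' 1) := div_nonneg hApos.le (by linarith)
    refine ⟨1 + A / (-v' 1), le_add_of_nonneg_right hAdiv, ?_⟩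
    have hcalc := key (1 + A / (-v' 1)) (le_add_of_nonneg_right hAdiv)
    have hne : v' 1 ≠ 0 := ne_of_lt h1
    have hne' : -v' 1 ≠ 0 := neg_ne_zero.mpr hne
    have : v' 1 * (1 + A / (-v' 1) - 1) = -A := by
      field_simp
      ring
    rw [this] at hcalc
    have : v 1 ≤ max (v 1) 0 := le_max_left _ _
    linarith
  -- hitting time R
  have hvcont : ContinuousOn v (Icc 0 s₀) :=
    fun x hx => ((hv x hx.1).continuousAt).continuousWithinAt
  obtain ⟨R, hRmem, hvR⟩ : ∃ R ∈ Icc (0:ℝ) s₀, v R = 0 := by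
    have h0s₀ : (0:ℝ) ≤ s₀ := le_trans zero_le_one hs₀1
    have := intermediate_value_Icc' h0s₀ hvcont
      (show (0:ℝ) ∈ Icc (v s₀) (v 0) from ⟨hs₀neg.le, by rw [hv0]; exact hℓ.le⟩)
    obtain ⟨R, hR, hvR⟩ := this
    exact ⟨R, hR, hvR⟩
  have hRpos : 0 < R := by
    rcases eq_or_lt_of_le hRmem.1 with h | h
    · exfalso; rw [← h, hv0] at hvR; linarith
    · exact h
  -- v values in [0, R]
  have hvnonneg : ∀ x ∈ Icc 0 R, 0 ≤ v x := by
    intro x hx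
    rw [← hvR]
    exact hvanti.antitoneOn (show x ∈ Ici (0:ℝ) from hx.1) (show R ∈ Ici (0:ℝ) from hRmem.1) hx.2
  have hvlt : ∀ x, 0 < x → v x < ℓ := by
    intro x hx
    have := hvanti self_mem_Ici hx.le hx
    rwa [hv0] at this
  -- the integrand q
  set q : ℝ → ℝ := fun t => 1 / Real.sqrt (2 * lam * (G ℓ - G t)) with hq
  have hsq_cont : Continuous (fun t => Real.sqrt (2 * lam * (G ℓ - G t))) :=
    Real.continuous_sqrt.comp (continuous_const.mul (continuous_const.sub hGcont))
  have hsq_pos : ∀ t < ℓ, 0 < Real.sqrt (2 * lam * (G ℓ - G t)) := fun t ht =>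
    Real.sqrt_pos.2 (by have := hGpos t ht; positivity)
  have hqcont : ∀ t < ℓ, ContinuousAt q t := fun t ht =>
    continuousAt_const.div hsq_cont.continuousAt (ne_of_gt (hsq_pos t ht))
  have hqmeas : Measurable q := by
    simp only [hq, one_div]
    exact hsq_cont.measurable.inv
  have hqnn : ∀ t, 0 ≤ q t := fun t => by
    simp only [hq]; positivity
  -- integrability of q on [0, ℓ]
  have hqint : IntervalIntegrable q volume 0 ℓ := by
    set c : ℝ := (Real.sqrt (2 * lam * g ℓ))⁻¹ with hc
    set B : ℝ → ℝ := fun t => c * (ℓ - t) ^ (-(1:ℝ)/2) with hB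
    have hBint : IntervalIntegrable B volume 0 ℓ := by
      have h1 : IntervalIntegrable (fun x : ℝ => x ^ (-(1:ℝ)/2)) volume 0 ℓ :=
        intervalIntegral.intervalIntegrable_rpow' (by norm_num)
      have h2 := (h1.comp_sub_left ℓ).symm
      simp only [sub_zero, sub_self] at h2
      exact h2.const_mul c
    have hcnn : 0 ≤ c := by positivity
    have hbound : ∀ x ∈ Icc (0:ℝ) ℓ, q x ≤ B x := by
      intro x hx
      rcases eq_or_lt_of_le hx.2 with h | h
      · simp only [hq, hB, h, sub_self, mul_zero, Real.sqrt_zero, div_zero,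
          Real.zero_rpow (by norm_num : (-(1:ℝ)/2) ≠ 0)]
        simp
      · have hx1 : 0 < ℓ - x := by linarith
        have hlow : Real.sqrt (2 * lam * g ℓ) * Real.sqrt (ℓ - x)
            ≤ Real.sqrt (2 * lam * (G ℓ - G x)) := by
          rw [← Real.sqrt_mul (by positivity)]
          apply Real.sqrt_le_sqrt
          have := hGlow x h.le
          nlinarith
        have hden : 0 < Real.sqrt (2 * lam * g ℓ) * Real.sqrt (ℓ - x) := by
          have h1 : (0:ℝ) < 2 * lam * g ℓ := by positivity
          exact mul_pos (Real.sqrt_pos.2 h1) (Real.sqrt_pos.2 hx1)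
        have : q x ≤ 1 / (Real.sqrt (2 * lam * g ℓ) * Real.sqrt (ℓ - x)) :=
          one_div_le_one_div_of_le hden hlow
        refine this.trans (le_of_eq ?_)
        have hrp : (ℓ - x) ^ (-(1:ℝ)/2) = (Real.sqrt (ℓ - x))⁻¹ := by
          rw [Real.sqrt_eq_rpow, ← Real.rpow_neg hx1.le]
          norm_num
        simp only [hB, hc, hrp]
        rw [one_div, mul_inv]
    apply hBint.mono_fun (hqmeas.aestronglyMeasurable.restrict)
    have : ∀ᵐ x ∂(volume.restrict (uIoc 0 ℓ)), ‖q x‖ ≤ ‖B x‖ := by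
      rw [ae_restrict_iff' measurableSet_uIoc]
      filter_upwards with x hx
      have hx' : x ∈ Icc (0:ℝ) ℓ := Ioc_subset_Icc_self (by rwa [uIoc_of_le hℓ.le] at hx)
      have h1 := hbound x hx'
      have h2 := hqnn x
      rw [Real.norm_eq_abs, Real.norm_eq_abs, abs_of_nonneg h2]
      exact h1.trans (le_abs_self _)
    exact this
  have hqint' : ∀ t ∈ Icc 0 ℓ, IntervalIntegrable q volume t ℓ := by
    intro t ht
    apply hqint.mono_set
    rw [uIcc_of_le ht.2, uIcc_of_le hℓ.le]
    exact Icc_subset_Icc ht.1 le_rfl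
  have hqint0 : ∀ t ∈ Icc 0 ℓ, IntervalIntegrable q volume 0 t := by
    intro t ht
    apply hqint.mono_set
    rw [uIcc_of_le ht.1, uIcc_of_le hℓ.le]
    exact Icc_subset_Icc le_rfl ht.2
  set F : ℝ → ℝ := fun t => ∫ u in t..ℓ, q u with hF
  have hFderiv : ∀ t ∈ Ico 0 ℓ, HasDerivAt F (-(q t)) t := by
    intro t ht
    apply intervalIntegral.integral_hasDerivAt_left (hqint' t ⟨ht.1, ht.2.le⟩)
    · exact ⟨univ, univ_mem, (hqmeas.aestronglyMeasurable).restrict⟩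
    · exact hqcont t ht.2
  have hFcont : ContinuousOn F (Icc 0 ℓ) := by
    have hint : IntegrableOn q (uIcc 0 ℓ) volume := by
      rw [uIcc_of_le hℓ.le]
      exact (intervalIntegrable_iff_integrableOn_Icc_of_le hℓ.le).1 hqint
    have hprim := intervalIntegral.continuousOn_primitive_interval hint
    rw [uIcc_of_le hℓ.le] at hprim
    have : ContinuousOn (fun t => (∫ u in (0:ℝ)..ℓ, q u) - ∫ u in (0:ℝ)..t, q u)
        (Icc 0 ℓ) := continuousOn_const.sub hprim
    apply this.congr
    intro t ht
    rw [hF]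
    exact (intervalIntegral.integral_interval_sub_left hqint (hqint0 t ht)).symm
  have hFl : F ℓ = 0 := intervalIntegral.integral_same
  -- main identity on [ε, R]
  have key : ∀ ε ∈ Ioo 0 R, F (v ε) - ε = F 0 - R := by
    intro ε hε
    set ψ : ℝ → ℝ := fun s => F (v s) - s with hψ
    have hvεlt : v ε < ℓ := hvlt ε hε.1
    have hψd : ∀ x ∈ Icc ε R, HasDerivAt ψ 0 x := by
      intro x hx
      have hx0 : 0 ≤ x := le_trans hε.1.le hx.1
      have hvx_lt : v x < ℓ := lt_of_le_of_lt
        (hvanti.antitoneOn (show ε ∈ Ici (0:ℝ) from hε.1.le) (show x ∈ Ici (0:ℝ) from hx0) hx.1) hvεlt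
      have hvx_nn : 0 ≤ v x := hvnonneg x ⟨hx0, hx.2⟩
      have hFd := hFderiv (v x) ⟨hvx_nn, hvx_lt⟩
      have hchain := (hFd.comp x (hv x hx0)).sub (hasDerivAt_id x)
      have heq : -q (v x) * v' x - 1 = 0 := by
        have hne : Real.sqrt (2 * lam * (G ℓ - G (v x))) ≠ 0 :=
          ne_of_gt (hsq_pos (v x) hvx_lt)
        rw [hv'eq x hx0]
        simp only [hq, one_div, neg_mul, mul_neg, neg_neg, inv_mul_cancel₀ hne]
        norm_num
      rw [heq] at hchain
      exact hchain
    have hψc : ContinuousOn ψ (Icc ε R) :=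
      fun x hx => ((hψd x hx).continuousAt).continuousWithinAt
    have := constant_of_has_deriv_right_zero hψc
      (fun x hx => (hψd x ⟨hx.1, hx.2.le⟩).hasDerivWithinAt) R
      ⟨hε.2.le, le_rfl⟩
    simp only [hψ, hvR] at this
    linarith [this]
  -- take limit ε → 0+
  have hR_eq : R = F 0 := by
    have hmem : Ioo (0:ℝ) R ∈ nhdsWithin (0:ℝ) (Ioi 0) :=
      Ioo_mem_nhdsGT_of_mem ⟨le_rfl, hRpos⟩
    have hconst : Tendsto (fun ε => F (v ε) - ε) (nhdsWithin 0 (Ioi 0))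
        (nhds (F 0 - R)) := by
      apply Tendsto.congr' _ tendsto_const_nhds
      filter_upwards [hmem] with ε hε
      exact (key ε hε).symm
    have hv_tend : Tendsto v (nhdsWithin 0 (Ioi 0)) (nhdsWithin ℓ (Icc 0 ℓ)) := by
      rw [tendsto_nhdsWithin_iff]
      constructor
      · have := (hv 0 le_rfl).continuousAt.tendsto
        rw [hv0] at this
        exact this.mono_left nhdsWithin_le_nhds
      · filter_upwards [hmem] with ε hε
        exact ⟨(hvnonneg ε ⟨hε.1.le, hε.2.le⟩), (hvlt ε hε.1).le⟩
    have hF_tend : Tendsto (fun ε => F (v ε)) (nhdsWithin 0 (Ioi 0)) (nhds 0) := by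
      have := (hFcont ℓ ⟨hℓ.le, le_rfl⟩).tendsto
      rw [hFl] at this
      exact this.comp hv_tend
    have hid : Tendsto (fun ε : ℝ => ε) (nhdsWithin 0 (Ioi 0)) (nhds 0) :=
      tendsto_id.mono_left nhdsWithin_le_nhds
    have hlim : Tendsto (fun ε => F (v ε) - ε) (nhdsWithin 0 (Ioi 0)) (nhds 0) := by
      simpa using hF_tend.sub hid
    have := tendsto_nhds_unique hconst hlim
    linarith
  refine ⟨R, hRpos, hvR, ?_⟩
  have hqq : ∀ t, q t = (1 / Real.sqrt (2 * lam)) * (1 / Real.sqrt (∫ s in t..ℓ, g s)) := by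
    intro t
    simp only [hq]
    rw [← hGsub t, Real.sqrt_mul (by positivity : (0:ℝ) ≤ 2 * lam)]
    rw [one_div, one_div, one_div, mul_inv]
  have hfinal : F 0 = (1 / Real.sqrt (2 * lam)) *
      ∫ t in (0:ℝ)..ℓ, 1 / Real.sqrt (∫ s in t..ℓ, g s) :=
    calc F 0 = ∫ t in (0:ℝ)..ℓ, q t := by simp only [hF]
      _ = ∫ t in (0:ℝ)..ℓ, (1 / Real.sqrt (2 * lam)) *
            (1 / Real.sqrt (∫ s in t..ℓ, g s)) := by simp only [hqq]
      _ = _ := intervalIntegral.integral_const_mul _ _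
  rw [hR_eq, hfinal]
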